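/- arXiv:2401.08203 — 2 statements merged into one kernel-verified Lean document; each statement's English description precedes it below -/
import Mathlib

section
/- The universal ℵ₀-extension of the monoid (ℕ, +) is ℕ ∪ {∞}, where the ℵ₀-sum of a family of naturals with finite support is the usual sum, and any family with infinite support (or containing ∞) sums to ∞. Equivalently: ℕ ∪ {∞} with this ℵ₀-monoid structure is ℵ₀⁻-braided over ℕ. -/
open scoped Classical

universe u v w

/-- A κ-monoid (Definition 2.1 of the paper), with the index cardinal κ modelled
by an (infinite) index type `ι`.  `base` plays the role of the element `0 ∈ κ`. -/
structure KappaMonoid (ι : Type u) (H : Type v) where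
  zero : H
  base : ι
  sum : (ι → H) → H
  /-- (A1) -/
  sum_single : ∀ x : ι → H, (∀ i, i ≠ base → x i = zero) → sum x = x base
  /-- (A2) -/
  sum_flatten : ∀ (x : ι × ι → H) (π : ι × ι ≃ ι),
    sum (fun i => sum fun j => x (i, j)) = sum fun k => x (π.symm k)

namespace KappaMonoid

variable {ι : Type u} {H : Type v}

/-- The family with value `a` at `i`, `b` at `j`, and `0` elsewhere. -/
noncomputable def pairFam (M : KappaMonoid ι H) (i j : ι) (a b : H) : ι → H :=
  fun k => if k = i then a else if k = j then b else M.zero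

/-- The induced binary addition `a + b` on a κ-monoid. -/
noncomputable def add [Nontrivial ι] (M : KappaMonoid ι H) (a b : H) : H :=
  M.sum (M.pairFam M.base (Classical.choose (exists_ne M.base)) a b)

/-- `α·a`, where the cardinal `α` is realized as the cardinality of `s ⊆ ι`:
the κ-sum of the family equal to `a` on `s` and `0` elsewhere. -/
noncomputable def smulSet (M : KappaMonoid ι H) (s : Set ι) (a : H) : H :=
  M.sum fun i => if i ∈ s then a else M.zero

/-- The κ-sum of the subfamily of `x` supported on `s` (padding by `0`). -/
noncomputable def sumOn (M : KappaMonoid ι H) (s : Set ι) (x : ι → H) : H :=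
  M.sum fun i => if i ∈ s then x i else M.zero

end KappaMonoid
/-- A limit element of the well-order (the minimum counts as a limit element). -/
def IsLimitElt {ι : Type u} [Preorder ι] [SuccOrder ι] (μ : ι) : Prop :=
  ¬ ∃ ν, ν < μ ∧ Order.succ ν = μ

/-- An indexed partition of the index set `ι` (blocks may be empty). -/
def IsIndexedPartition {ι : Type u} (I : ι → Set ι) : Prop :=
  (∀ μ ν, μ ≠ ν → Disjoint (I μ) (I ν)) ∧ (⋃ μ, I μ) = Set.univ

namespace KappaMonoid
variable {ι : Type u} {H : Type v}

/-- Definition 3.1(1): the families `x` and `y`, with entries in the λ⁻-submonoid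
`X ⊆ H`, are λ⁻-braided: there are indexed partitions `(I_μ)`, `(J_μ)` of `ι` with
blocks of cardinality `< λ` and braiding families `(u_μ)`, `(v_μ)` in `X` with
`v_μ = 0` at limit elements, such that `Σ_{i∈I_μ} x_i = v_μ + u_μ` and
`Σ_{j∈J_μ} y_j = v_{μ+1} + u_μ` for all `μ`. -/
noncomputable def Braided [Infinite ι] [LinearOrder ι] [SuccOrder ι]
    (M : KappaMonoid ι H) (lam : Cardinal.{u}) (X : Set H) (x y : ι → H) : Prop :=
  ∃ (I J : ι → Set ι) (u v : ι → H),
    IsIndexedPartition I ∧ IsIndexedPartition J ∧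
    (∀ μ, Cardinal.mk (I μ) < lam) ∧ (∀ μ, Cardinal.mk (J μ) < lam) ∧
    (∀ μ, u μ ∈ X) ∧ (∀ μ, v μ ∈ X) ∧
    (∀ μ, IsLimitElt μ → v μ = M.zero) ∧
    (∀ μ, M.sumOn (I μ) x = M.add (v μ) (u μ)) ∧
    (∀ μ, M.sumOn (J μ) y = M.add (v (Order.succ μ)) (u μ))

/-- `X` is a λ⁻-submonoid of the κ-monoid `H`: it contains `0` and is closed under
sums of families with support of cardinality `< λ`. -/
def IsSubmonoidLT (M : KappaMonoid ι H) (lam : Cardinal.{u}) (X : Set H) : Prop :=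
  M.zero ∈ X ∧ ∀ x : ι → H, (∀ i, x i ∈ X) →
    Cardinal.mk {i | x i ≠ M.zero} < lam → M.sum x ∈ X

/-- Definition 3.1(2): the κ-monoid `H` is λ⁻-braided over `X`: `X` generates `H`
as a κ-monoid, and any two κ-indexed families in `X` with equal κ-sums are
λ⁻-braided. -/
noncomputable def BraidedOver [Infinite ι] [LinearOrder ι] [SuccOrder ι]
    (M : KappaMonoid ι H) (lam : Cardinal.{u}) (X : Set H) : Prop :=
  (∀ h : H, ∃ x : ι → H, (∀ i, x i ∈ X) ∧ M.sum x = h) ∧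
  ∀ x y : ι → H, (∀ i, x i ∈ X) → (∀ i, y i ∈ X) →
    M.sum x = M.sum y → M.Braided lam X x y

end KappaMonoid
/-! ### Auxiliary development: the ℵ₀-monoid `ℕ∞` -/

namespace NatENatAux

open Function

/-- The ℵ₀-sum on `ℕ∞`. -/
noncomputable def Msum (x : ℕ → ℕ∞) : ℕ∞ :=
  if (Function.support x).Finite then ∑ᶠ i, x i else ⊤

lemma Msum_of_finite {x : ℕ → ℕ∞} (h : (Function.support x).Finite) :
    Msum x = ∑ᶠ i, x i := if_pos h

lemma Msum_of_infinite {x : ℕ → ℕ∞} (h : (Function.support x).Infinite) :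
    Msum x = ⊤ := if_neg h

lemma Msum_eq_top_of_mem_top {x : ℕ → ℕ∞} (i : ℕ) (h : x i = ⊤) : Msum x = ⊤ := by
  by_cases hf : (Function.support x).Finite
  · rw [Msum_of_finite hf]
    have hle := single_le_finsum i hf (fun j => (zero_le : (0:ℕ∞) ≤ x j))
    rw [h] at hle
    exact top_le_iff.mp hle
  · exact Msum_of_infinite hf

lemma Msum_flatten (x : ℕ × ℕ → ℕ∞) (π : ℕ × ℕ ≃ ℕ) :
    Msum (fun i => Msum fun j => x (i, j)) = Msum fun k => x (π.symm k) := by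
  have hsupp : Function.support (fun k => x (π.symm k)) = ⇑π.symm ⁻¹' Function.support x := rfl
  by_cases hS : (Function.support x).Finite
  · have hR : (Function.support fun k => x (π.symm k)).Finite := by
      rw [hsupp]; exact hS.preimage π.symm.injective.injOn
    have hrow : ∀ i, (Function.support fun j => x (i, j)).Finite := by
      intro i
      have : (Function.support fun j => x (i, j)) = (fun j => (i, j)) ⁻¹' Function.support x := rfl
      rw [this]
      exact hS.preimage (Prod.mk_right_injective i).injOn
    have hF : (Function.support fun i => Msum fun j => x (i, j)).Finite := by
      apply (hS.image Prod.fst).subset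
      intro i hi
      rw [Function.mem_support, Msum_of_finite (hrow i)] at hi
      have : ∃ j, x (i, j) ≠ 0 := by
        by_contra hco
        push_neg at hco
        exact hi (by simp [hco])
      obtain ⟨j, hj⟩ := this
      exact ⟨(i, j), hj, rfl⟩
    rw [Msum_of_finite hF, Msum_of_finite hR]
    calc (∑ᶠ i, Msum fun j => x (i, j)) = ∑ᶠ i, ∑ᶠ j, x (i, j) := by
            exact finsum_congr fun i => Msum_of_finite (hrow i)
      _ = ∑ᶠ p, x p := (finsum_curry x hS).symm
      _ = ∑ᶠ k, x (π.symm k) := (finsum_comp_equiv π.symm).symm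
  · have hR : Msum (fun k => x (π.symm k)) = ⊤ := by
      apply Msum_of_infinite
      intro hfin
      apply hS
      have := hfin.image ⇑π.symm
      rwa [hsupp, Set.image_preimage_eq _ π.symm.surjective] at this
    rw [hR]
    by_cases hrow : ∃ i, (Function.support fun j => x (i, j)).Infinite
    · obtain ⟨i, hi⟩ := hrow
      exact Msum_eq_top_of_mem_top i (Msum_of_infinite hi)
    · push_neg at hrow
      apply Msum_of_infinite
      have hT : {i | ∃ j, x (i, j) ≠ 0}.Infinite := by
        intro hTfin
        apply hS
        have hsub : Function.support x ⊆
            ⋃ i ∈ {i | ∃ j, x (i, j) ≠ 0}, (fun j => (i, j)) '' Function.support fun j => x (i, j) := by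
          rintro ⟨i, j⟩ hp
          exact Set.mem_biUnion ⟨j, hp⟩ ⟨j, hp, rfl⟩
        exact ((hTfin.biUnion (fun i _ => (hrow i).image _)).subset hsub)
      apply hT.mono
      intro i hi
      obtain ⟨j, hj⟩ := hi
      rw [Function.mem_support, Msum_of_finite (hrow i)]
      intro h0
      apply hj
      have := single_le_finsum j (hrow i) (fun j' => (zero_le : (0:ℕ∞) ≤ x (i, j')))
      rw [h0] at this
      exact le_antisymm this zero_le

/-- The ℵ₀-monoid structure on `ℕ∞`. -/
noncomputable def natM : KappaMonoid ℕ ℕ∞ where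
  zero := 0
  base := 0
  sum := Msum
  sum_single := by
    intro x h
    have hs : Function.support x ⊆ {0} := by
      intro i hi
      by_contra h0
      exact hi (h i (by simpa using h0))
    exact (Msum_of_finite ((Set.finite_singleton 0).subset hs)).trans (finsum_eq_single x 0 h)
  sum_flatten := Msum_flatten

lemma Msum_eq_sum {fam : ℕ → ℕ∞} (s : Finset ℕ) (h : ∀ i ∉ s, fam i = 0) :
    Msum fam = ∑ i ∈ s, fam i := by
  have hsub : Function.support fam ⊆ ↑s := fun i hi => by
    by_contra hc; exact hi (h i hc)
  rw [Msum_of_finite (Set.Finite.subset s.finite_toSet hsub),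
    finsum_eq_finset_sum_of_support_subset _ hsub]

lemma natM_add (a b : ℕ∞) : natM.add a b = a + b := by
  have hc0 : Classical.choose (exists_ne natM.base) ≠ natM.base :=
    Classical.choose_spec (exists_ne natM.base)
  set c := Classical.choose (exists_ne natM.base) with hc
  unfold KappaMonoid.add KappaMonoid.pairFam
  have hz : natM.zero = 0 := rfl
  have hs : natM.sum = Msum := rfl
  rw [hz, hs]
  refine (Msum_eq_sum ({natM.base, c} : Finset ℕ) ?_).trans ?_
  · intro i hi
    simp only [Finset.mem_insert, Finset.mem_singleton, not_or] at hi
    rw [if_neg hi.1, if_neg hi.2]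
  · rw [Finset.sum_pair (Ne.symm hc0), if_pos rfl, if_neg hc0, if_pos rfl]

lemma natM_sumOn_Ico (aN bN : ℕ) (x : ℕ → ℕ∞) :
    natM.sumOn (Set.Ico aN bN) x = ∑ i ∈ Finset.Ico aN bN, x i := by
  unfold KappaMonoid.sumOn
  have hz : natM.zero = 0 := rfl
  have hs : natM.sum = Msum := rfl
  rw [hz, hs]
  refine (Msum_eq_sum (Finset.Ico aN bN) ?_).trans ?_
  · intro i hi
    rw [if_neg (by simpa [Set.mem_Ico] using hi)]
  · refine Finset.sum_congr rfl fun i hi => ?_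
    rw [if_pos (by simpa [Set.mem_Ico] using hi)]

/-- Partial sums are below the total ℵ₀-sum. -/
lemma partial_le (f : ℕ → ℕ) (k : ℕ) :
    ((∑ i ∈ Finset.range k, f i : ℕ) : ℕ∞) ≤ Msum (fun i => (f i : ℕ∞)) := by
  by_cases h : (Function.support fun i => (f i : ℕ∞)).Finite
  · rw [Msum_of_finite h]
    have hsub : (Function.support fun i => (f i : ℕ∞)) ⊆
        ↑(h.toFinset ∪ Finset.range k) := by
      intro i hi
      simp [Set.Finite.mem_toFinset, hi]
    rw [finsum_eq_finset_sum_of_support_subset _ hsub]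
    rw [Nat.cast_sum]
    exact Finset.sum_le_sum_of_subset Finset.subset_union_right
  · rw [Msum_of_infinite h]; exact le_top

/-- One can reach any value below the total sum by a partial sum, arbitrarily far out. -/
lemma reach (f : ℕ → ℕ) (C k : ℕ) (hC : (C : ℕ∞) ≤ Msum (fun i => (f i : ℕ∞))) :
    ∃ k', k < k' ∧ C ≤ ∑ i ∈ Finset.range k', f i := by
  by_cases h : (Function.support fun i => (f i : ℕ∞)).Finite
  · rw [Msum_of_finite h] at hC
    set K := h.toFinset ∪ Finset.range (k + 1) with hK
    have hsub : (Function.support fun i => (f i : ℕ∞)) ⊆ ↑K := by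
      intro i hi
      simp [hK, Set.Finite.mem_toFinset, hi]
    rw [finsum_eq_finset_sum_of_support_subset _ hsub, ← Nat.cast_sum, Nat.cast_le] at hC
    refine ⟨K.sup id + 1, ?_, ?_⟩
    · have : k ≤ K.sup id := Finset.le_sup (f := id) (by simp [hK])
      omega
    · refine le_trans hC (Finset.sum_le_sum_of_subset ?_)
      intro i hi
      simp only [Finset.mem_range]
      exact Nat.lt_succ_of_le (Finset.le_sup (f := id) hi)
  · have hsupp : (Function.support f).Infinite := by
      have he : (Function.support fun i => (f i : ℕ∞)) = Function.support f := by
        ext i; simp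
      rw [he] at h
      exact h
    clear hC h
    induction C with
    | zero => exact ⟨k + 1, Nat.lt_succ_self k, Nat.zero_le _⟩
    | succ C ih =>
      obtain ⟨k', hk', hC'⟩ := ih
      obtain ⟨j, hj, hjk⟩ := hsupp.exists_gt k'
      refine ⟨j + 1, by omega, ?_⟩
      have h1 : 1 ≤ f j := Nat.one_le_iff_ne_zero.mpr hj
      have h2 : ∑ i ∈ Finset.range k', f i + f j ≤ ∑ i ∈ Finset.range (j + 1), f i := by
        rw [Finset.sum_range_succ]
        have := Finset.sum_le_sum_of_subset
          (Finset.range_mono (le_of_lt hjk) : Finset.range k' ⊆ Finset.range j) (f := f)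
        omega
      omega

/-- The interleaving sequence of block endpoints. -/
noncomputable def braidSeq (f g : ℕ → ℕ)
    (Hf : ∀ k j, ∃ k', k < k' ∧ (∑ i ∈ Finset.range j, g i) ≤ ∑ i ∈ Finset.range k', f i)
    (Hg : ∀ k j, ∃ k', k < k' ∧ (∑ i ∈ Finset.range j, f i) ≤ ∑ i ∈ Finset.range k', g i) :
    ℕ → ℕ × ℕ
  | 0 => (0, 0)
  | (μ + 1) =>
    let p := braidSeq f g Hf Hg μ
    let n' := (Hf p.1 p.2).choose
    ⟨n', (Hg p.2 n').choose⟩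

lemma braidSeq_succ_spec (f g : ℕ → ℕ)
    (Hf : ∀ k j, ∃ k', k < k' ∧ (∑ i ∈ Finset.range j, g i) ≤ ∑ i ∈ Finset.range k', f i)
    (Hg : ∀ k j, ∃ k', k < k' ∧ (∑ i ∈ Finset.range j, f i) ≤ ∑ i ∈ Finset.range k', g i)
    (μ : ℕ) :
    (braidSeq f g Hf Hg μ).1 < (braidSeq f g Hf Hg (μ+1)).1 ∧
    (braidSeq f g Hf Hg μ).2 < (braidSeq f g Hf Hg (μ+1)).2 ∧
    (∑ i ∈ Finset.range ((braidSeq f g Hf Hg μ).2), g i) ≤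
      ∑ i ∈ Finset.range ((braidSeq f g Hf Hg (μ+1)).1), f i ∧
    (∑ i ∈ Finset.range ((braidSeq f g Hf Hg (μ+1)).1), f i) ≤
      ∑ i ∈ Finset.range ((braidSeq f g Hf Hg (μ+1)).2), g i := by
  have h1 := (Hf (braidSeq f g Hf Hg μ).1 (braidSeq f g Hf Hg μ).2).choose_spec
  have h2 := (Hg (braidSeq f g Hf Hg μ).2
    (Hf (braidSeq f g Hf Hg μ).1 (braidSeq f g Hf Hg μ).2).choose).choose_spec
  exact ⟨h1.1, h2.1, h1.2, h2.2⟩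

lemma le_apply_of_strictMono {n : ℕ → ℕ} (hm : StrictMono n) (μ : ℕ) : μ ≤ n μ := by
  induction μ with
  | zero => exact Nat.zero_le _
  | succ ν ih => have : n ν < n (ν + 1) := hm (by omega); omega

lemma isPartition_Ico {n : ℕ → ℕ} (h0 : n 0 = 0) (hm : StrictMono n) :
    IsIndexedPartition (fun μ => Set.Ico (n μ) (n (μ+1))) := by
  constructor
  · intro μ ν hne
    rw [Set.disjoint_left]
    intro k hk1 hk2
    rw [Set.mem_Ico] at hk1 hk2
    rcases lt_or_gt_of_ne hne with h | h
    · have : n (μ + 1) ≤ n ν := hm.monotone (by omega)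
      omega
    · have : n (ν + 1) ≤ n μ := hm.monotone (by omega)
      omega
  · ext k
    simp only [Set.mem_iUnion, Set.mem_univ, iff_true, Set.mem_Ico]
    set μ := Nat.findGreatest (fun μ => n μ ≤ k) k with hμ
    have hle : n μ ≤ k :=
      Nat.findGreatest_spec (P := fun ν => n ν ≤ k) (m := 0) (Nat.zero_le k)
        (by show n 0 ≤ k; rw [h0]; exact Nat.zero_le k)
    refine ⟨μ, hle, ?_⟩
    by_contra hcon
    push_neg at hcon
    have h1 : μ + 1 ≤ k := le_trans (le_apply_of_strictMono hm (μ+1)) hcon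
    exact Nat.findGreatest_is_greatest (P := fun ν => n ν ≤ k)
      (hμ ▸ Nat.lt_succ_self μ) h1 hcon

lemma isLimitElt_nat {μ : ℕ} (h : IsLimitElt μ) : μ = 0 := by
  by_contra h0
  obtain ⟨ν, rfl⟩ := Nat.exists_eq_succ_of_ne_zero h0
  exact h ⟨ν, Nat.lt_succ_self ν, Order.succ_eq_add_one ν⟩

end NatENatAux
/-- Example 3.3(1) / Example 3.12: the ℵ₀-monoid `ℕ ∪ {∞}`, in which a countable
family with finite support sums to its usual sum and any family with infinite
support sums to `∞`, is the universal ℵ₀-extension of `(ℕ, +)`: equivalently, it is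
ℵ₀⁻-braided over the submonoid `ℕ` (the range of the coercion `ℕ → ℕ∞`). -/
theorem universal_aleph0_extension_nat :
    ∃ M : KappaMonoid ℕ ℕ∞,
      M.zero = 0 ∧
      (∀ x : ℕ → ℕ∞, (Function.support x).Finite → M.sum x = ∑ᶠ i, x i) ∧
      (∀ x : ℕ → ℕ∞, (Function.support x).Infinite → M.sum x = ⊤) ∧
      M.BraidedOver Cardinal.aleph0 (Set.range ((↑) : ℕ → ℕ∞)) := by
  classical
  open NatENatAux in
  refine ⟨natM, rfl, fun x h => Msum_of_finite h, fun x h => Msum_of_infinite h, ?_, ?_⟩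
  · -- generation
    intro h
    induction h using ENat.recTopCoe with
    | top =>
      refine ⟨fun _ => 1, fun _ => ⟨1, rfl⟩, ?_⟩
      apply Msum_of_infinite
      have : Function.support (fun _ : ℕ => (1 : ℕ∞)) = Set.univ := by
        ext i; simp
      rw [this]
      exact Set.infinite_univ
    | coe n =>
      refine ⟨fun i => if i = 0 then (n : ℕ∞) else 0, ?_, ?_⟩
      · intro i
        dsimp only
        split
        · exact ⟨n, rfl⟩
        · exact ⟨0, rfl⟩
      · exact (natM.sum_single _ (fun i hi => if_neg hi)).trans (if_pos rfl)
  · -- braiding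
    intro x y hx hy hsum
    set f : ℕ → ℕ := fun i => (x i).toNat with hf
    set g : ℕ → ℕ := fun i => (y i).toNat with hg
    have hxeq : x = fun i => (f i : ℕ∞) := by
      funext i
      obtain ⟨n, hn⟩ := hx i
      rw [hf]; simp only []; rw [← hn, ENat.toNat_coe]
    have hyeq : y = fun i => (g i : ℕ∞) := by
      funext i
      obtain ⟨n, hn⟩ := hy i
      rw [hg]; simp only []; rw [← hn, ENat.toNat_coe]
    have hsum' : Msum (fun i => (f i : ℕ∞)) = Msum (fun i => (g i : ℕ∞)) := by
      rw [← hxeq, ← hyeq]; exact hsum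
    have Hf : ∀ k j, ∃ k', k < k' ∧
        (∑ i ∈ Finset.range j, g i) ≤ ∑ i ∈ Finset.range k', f i := fun k j =>
      reach f _ k (by rw [hsum']; exact partial_le g j)
    have Hg : ∀ k j, ∃ k', k < k' ∧
        (∑ i ∈ Finset.range j, f i) ≤ ∑ i ∈ Finset.range k', g i := fun k j =>
      reach g _ k (by rw [← hsum']; exact partial_le f j)
    set n : ℕ → ℕ := fun μ => (braidSeq f g Hf Hg μ).1 with hn
    set m : ℕ → ℕ := fun μ => (braidSeq f g Hf Hg μ).2 with hm
    have hspec := braidSeq_succ_spec f g Hf Hg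
    have hn0 : n 0 = 0 := rfl
    have hm0 : m 0 = 0 := rfl
    have hnmono : StrictMono n := strictMono_nat_of_lt_succ (fun μ => (hspec μ).1)
    have hmmono : StrictMono m := strictMono_nat_of_lt_succ (fun μ => (hspec μ).2.1)
    have hch1 : ∀ μ, (∑ i ∈ Finset.range (m μ), g i) ≤
        ∑ i ∈ Finset.range (n (μ+1)), f i := fun μ => (hspec μ).2.2.1
    have hch2 : ∀ μ, (∑ i ∈ Finset.range (n (μ+1)), f i) ≤
        ∑ i ∈ Finset.range (m (μ+1)), g i := fun μ => (hspec μ).2.2.2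
    have hch0 : ∀ μ, (∑ i ∈ Finset.range (n μ), f i) ≤
        ∑ i ∈ Finset.range (m μ), g i := by
      intro μ
      cases μ with
      | zero => rw [hn0, hm0]; simp
      | succ ν => exact hch2 ν
    have hIcof : ∀ μ, ∑ i ∈ Finset.range (n μ), f i +
        ∑ i ∈ Finset.Ico (n μ) (n (μ+1)), f i = ∑ i ∈ Finset.range (n (μ+1)), f i := by
      intro μ
      rw [Finset.range_eq_Ico, Finset.range_eq_Ico]
      exact Finset.sum_Ico_consecutive f (Nat.zero_le _) (le_of_lt (hnmono (Nat.lt_succ_self μ)))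
    have hIcog : ∀ μ, ∑ i ∈ Finset.range (m μ), g i +
        ∑ i ∈ Finset.Ico (m μ) (m (μ+1)), g i = ∑ i ∈ Finset.range (m (μ+1)), g i := by
      intro μ
      rw [Finset.range_eq_Ico, Finset.range_eq_Ico]
      exact Finset.sum_Ico_consecutive g (Nat.zero_le _) (le_of_lt (hmmono (Nat.lt_succ_self μ)))
    unfold KappaMonoid.Braided
    refine ⟨fun μ => Set.Ico (n μ) (n (μ+1)), fun μ => Set.Ico (m μ) (m (μ+1)),
      fun μ => (((∑ i ∈ Finset.range (n (μ+1)), f i) - ∑ i ∈ Finset.range (m μ), g i : ℕ) : ℕ∞),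
      fun μ => (((∑ i ∈ Finset.range (m μ), g i) - ∑ i ∈ Finset.range (n μ), f i : ℕ) : ℕ∞),
      isPartition_Ico hn0 hnmono, isPartition_Ico hm0 hmmono,
      fun μ => (Set.finite_Ico _ _).lt_aleph0, fun μ => (Set.finite_Ico _ _).lt_aleph0,
      fun μ => ⟨_, rfl⟩, fun μ => ⟨_, rfl⟩, ?_, ?_, ?_⟩
    · intro μ hμ
      rw [isLimitElt_nat hμ]
      dsimp only
      rw [hn0, hm0]
      simp only [Finset.range_zero, Finset.sum_empty, Nat.sub_zero, Nat.cast_zero]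
      rfl
    · intro μ
      dsimp only
      rw [natM_sumOn_Ico, natM_add, hxeq]
      rw [← Nat.cast_sum, ← Nat.cast_add, Nat.cast_inj]
      have e1 := hIcof μ
      have e2 := hch0 μ
      have e3 := hch1 μ
      omega
    · intro μ
      dsimp only
      rw [natM_sumOn_Ico, natM_add, hyeq, Order.succ_eq_add_one]
      rw [← Nat.cast_sum, ← Nat.cast_add, Nat.cast_inj]
      have e1 := hIcog μ
      have e2 := hch1 μ
      have e3 := hch2 μ
      omega
end

section
/- Let H = {(n,n) : n ∈ ℕ} ⊆ ℕ². The universal ℵ₀-extension of H is Ĥ = {(n,n) : n ∈ ℕ} ∪ {(ℵ₀,ℵ₀)} ⊆ F_{ℵ₀}², which is isomorphic to F_{ℵ₀} = ℕ ∪ {ℵ₀}. In particular, Ĥ is a proper ℵ₀-submonoid of the solution set in F_{ℵ₀}² of the equation 2x = x + y, which also contains all (ℵ₀, n) for n ∈ ℕ. -/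
open scoped Classical

universe u v w

open scoped Classical
noncomputable def s1 (x : ℕ → ℕ∞) : ℕ∞ :=
  if _ : (Function.support x).Finite then ∑ᶠ i, x i else ⊤
lemma s1_fin {x : ℕ → ℕ∞} (h : (Function.support x).Finite) : s1 x = ∑ᶠ i, x i := dif_pos h
lemma s1_inf {x : ℕ → ℕ∞} (h : (Function.support x).Infinite) : s1 x = ⊤ := dif_neg h
lemma s1_subset {x : ℕ → ℕ∞} {t : Finset ℕ} (h : Function.support x ⊆ ↑t) :
    s1 x = ∑ i ∈ t, x i := by
  rw [s1_fin (t.finite_toSet.subset h)]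
  exact finsum_eq_sum_of_support_subset x h
lemma le_s1 (x : ℕ → ℕ∞) (i : ℕ) : x i ≤ s1 x := by
  by_cases h : (Function.support x).Finite
  · rw [s1_fin h, finsum_eq_sum x h]
    by_cases hx : x i = 0
    · simp [hx]
    · exact Finset.single_le_sum (fun _ _ => zero_le) (h.mem_toFinset.2 hx)
  · rw [s1_inf h]; exact le_top

lemma s1_single (x : ℕ → ℕ∞) (h : ∀ i, i ≠ 0 → x i = 0) : s1 x = x 0 := by
  have hs : Function.support x ⊆ ↑({0} : Finset ℕ) := by
    intro i hi
    simp only [Finset.coe_singleton, Set.mem_singleton_iff]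
    by_contra hne
    exact hi (h i hne)
  rw [s1_subset hs, Finset.sum_singleton]

lemma s1_flatten (x : ℕ × ℕ → ℕ∞) (π : ℕ × ℕ ≃ ℕ) :
    s1 (fun i => s1 fun j => x (i, j)) = s1 fun k => x (π.symm k) := by
  by_cases hS : (Function.support x).Finite
  · -- finite total support
    have hRsupp : Function.support (fun k => x (π.symm k)) ⊆ ↑(hS.toFinset.image π) := by
      intro k hk
      simp only [Finset.coe_image, Set.mem_image, Finset.mem_coe]
      exact ⟨π.symm k, by simpa [Set.Finite.mem_toFinset] using hk, π.apply_symm_apply k⟩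
    rw [s1_subset hRsupp, Finset.sum_image (fun p _ q _ h => π.injective h)]
    simp only [Equiv.symm_apply_apply]
    set r : Finset ℕ := hS.toFinset.image Prod.fst with hr
    set t : Finset ℕ := hS.toFinset.image Prod.snd with ht
    have hrow : ∀ i, s1 (fun j => x (i, j)) = ∑ j ∈ t, x (i, j) := by
      intro i
      apply s1_subset
      intro j hj
      simp only [ht, Finset.coe_image, Set.mem_image, Finset.mem_coe]
      exact ⟨(i, j), by simpa [Set.Finite.mem_toFinset] using hj, rfl⟩
    have houter : Function.support (fun i => s1 fun j => x (i, j)) ⊆ ↑r := by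
      intro i hi
      rw [Function.mem_support, hrow i] at hi
      obtain ⟨j, hj, hne⟩ := Finset.exists_ne_zero_of_sum_ne_zero hi
      simp only [hr, Finset.coe_image, Set.mem_image, Finset.mem_coe]
      exact ⟨(i, j), by simpa [Set.Finite.mem_toFinset] using hne, rfl⟩
    rw [s1_subset houter]
    calc ∑ i ∈ r, s1 (fun j => x (i, j)) = ∑ i ∈ r, ∑ j ∈ t, x (i, j) := by
          exact Finset.sum_congr rfl fun i _ => hrow i
      _ = ∑ p ∈ r ×ˢ t, x p := by rw [Finset.sum_product]
      _ = ∑ p ∈ hS.toFinset, x p := by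
          apply (Finset.sum_subset ?_ ?_).symm
          · intro p hp
            simp only [Set.Finite.mem_toFinset, Function.mem_support] at hp
            simp only [Finset.mem_product, hr, ht, Finset.mem_image]
            exact ⟨⟨p, by simp [Set.Finite.mem_toFinset, hp], rfl⟩,
                   ⟨p, by simp [Set.Finite.mem_toFinset, hp], rfl⟩⟩
          · intro p _ hp
            simp only [Set.Finite.mem_toFinset, Function.mem_support, not_not] at hp
            exact hp
  · -- infinite total support
    have hS' : (Function.support x).Infinite := hS
    have hR : (Function.support fun k => x (π.symm k)).Infinite := by
      have : (Function.support fun k => x (π.symm k)) = π.symm ⁻¹' Function.support x := rfl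
      rw [this]
      exact hS'.preimage (by simp [Equiv.range_eq_univ])
    rw [s1_inf hR]
    by_cases hrow : ∃ i, (Function.support fun j => x (i, j)).Infinite
    · obtain ⟨i, hi⟩ := hrow
      have : s1 (fun j => x (i, j)) = ⊤ := s1_inf hi
      have h2 := le_s1 (fun i => s1 fun j => x (i, j)) i
      rw [this] at h2
      exact top_le_iff.mp h2
    · push_neg at hrow
      -- all rows finite, so infinitely many nonzero rows
      apply s1_inf
      intro hfin
      apply hS
      have : Function.support x ⊆
          ⋃ i ∈ hfin.toFinset, (fun j => (i, j)) '' (Function.support fun j => x (i, j)) := by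
        intro p hp
        simp only [Set.mem_iUnion]
        refine ⟨p.1, ?_, p.2, hp, rfl⟩
        simp only [Set.Finite.mem_toFinset, Function.mem_support]
        intro h0
        have := le_s1 (fun j => x (p.1, j)) p.2
        rw [h0] at this
        exact hp (le_antisymm this zero_le)
      exact (Set.Finite.biUnion (hfin.toFinset.finite_toSet)
        (fun i _ => (hrow i).image _)).subset this
section Helpers

/-- pair lemma: s1 of a two-point family. -/
lemma s1_pair {j : ℕ} (hj : j ≠ 0) (a b : ℕ∞) :
    s1 (fun k => if k = 0 then a else if k = j then b else 0) = a + b := by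
  have hs : Function.support (fun k => if k = 0 then a else if k = j then b else 0)
      ⊆ ↑({0, j} : Finset ℕ) := by
    intro k hk
    simp only [Finset.coe_insert, Finset.coe_singleton, Set.mem_insert_iff,
      Set.mem_singleton_iff]
    by_contra h
    push_neg at h
    simp only [Function.mem_support, if_neg h.1, if_neg h.2] at hk
    exact hk rfl
  rw [s1_subset hs, Finset.sum_pair (Ne.symm hj)]
  simp [hj, Ne.symm hj]

/-- s1 of an indicator on a finset. -/
lemma s1_indicator (t : Finset ℕ) (f : ℕ → ℕ∞) :
    s1 (fun k => if k ∈ (↑t : Set ℕ) then f k else 0) = ∑ k ∈ t, f k := by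
  have hs : Function.support (fun k => if k ∈ (↑t : Set ℕ) then f k else 0) ⊆ ↑t := by
    intro k hk
    simp only [Function.mem_support] at hk
    by_contra h
    simp [h] at hk
  rw [s1_subset hs]
  exact Finset.sum_congr rfl fun k hk => by simp [hk]

/-- cast of natural finset sum -/
lemma s1_cast_indicator (t : Finset ℕ) (f : ℕ → ℕ) :
    s1 (fun k => if k ∈ (↑t : Set ℕ) then (f k : ℕ∞) else 0) = ((∑ k ∈ t, f k : ℕ) : ℕ∞) := by
  rw [s1_indicator]; push_cast; rfl

/-- Prefix sums of a ℕ-valued family bounded by the s1-total. -/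
lemma prefix_le_s1 (f : ℕ → ℕ) (n : ℕ) :
    ((∑ k ∈ Finset.range n, f k : ℕ) : ℕ∞) ≤ s1 (fun k => (f k : ℕ∞)) := by
  by_cases h : (Function.support fun k => (f k : ℕ∞)).Finite
  · rw [s1_fin h, finsum_eq_sum _ h]
    push_cast
    have hsub : ∀ k ∈ Finset.range n, (f k : ℕ∞) ≠ 0 → k ∈ h.toFinset := by
      intro k _ hk
      simpa [Set.Finite.mem_toFinset] using hk
    calc (∑ k ∈ Finset.range n, (f k : ℕ∞))
        = ∑ k ∈ (Finset.range n).filter (fun k => (f k : ℕ∞) ≠ 0), (f k : ℕ∞) := by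
          rw [Finset.sum_filter_ne_zero]
      _ ≤ ∑ k ∈ h.toFinset, (f k : ℕ∞) := by
          apply Finset.sum_le_sum_of_subset
          intro k hk
          simp only [Finset.mem_filter] at hk
          exact hsub k hk.1 hk.2
  · rw [s1_inf h]; exact le_top

/-- Reachability of any admissible level by prefix sums, beyond any point. -/
lemma prefix_reach (f : ℕ → ℕ) (C m : ℕ) (hC : (C : ℕ∞) ≤ s1 (fun k => (f k : ℕ∞))) :
    ∃ n, m < n ∧ C ≤ ∑ k ∈ Finset.range n, f k := by
  by_cases h : (Function.support fun k => (f k : ℕ∞)).Finite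
  · -- finite support: the full sum is attained
    have hsupp : Function.support f = Function.support fun k => (f k : ℕ∞) := by
      ext k; simp [Function.mem_support]
    have hf : (Function.support f).Finite := hsupp ▸ h
    set t := hf.toFinset
    refine ⟨max (m + 1) (t.sup id + 1), by omega, ?_⟩
    have htsub : t ⊆ Finset.range (max (m + 1) (t.sup id + 1)) := by
      intro k hk
      simp only [Finset.mem_range]
      have : k ≤ Finset.sup _ id := Finset.le_sup (f := id) hk
      omega
    have : ∑ k ∈ Finset.range (max (m + 1) (t.sup id + 1)), f k = ∑ k ∈ t, f k := by
      apply (Finset.sum_subset htsub ?_).symm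
      intro k _ hk
      simpa [t, Set.Finite.mem_toFinset, Function.mem_support, not_not] using hk
    rw [this]
    -- C ≤ total
    have htot : s1 (fun k => (f k : ℕ∞)) = ((∑ k ∈ t, f k : ℕ) : ℕ∞) := by
      have hs : Function.support (fun k => (f k : ℕ∞)) ⊆ ↑t := by
        intro k hk
        simp only [t, Set.Finite.mem_toFinset]
        simpa [Function.mem_support] using hk
      rw [s1_subset hs]; push_cast; rfl
    rw [htot] at hC
    exact_mod_cast hC
  · -- infinite support: pick C support elements
    have hsupp : Function.support f = Function.support fun k => (f k : ℕ∞) := by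
      ext k; simp [Function.mem_support]
    have hf : (Function.support f).Infinite := by rw [hsupp]; exact h
    obtain ⟨s, hs_sub, hs_card⟩ := hf.exists_subset_card_eq C
    refine ⟨max (m + 1) (s.sup id + 1), by omega, ?_⟩
    have hssub : s ⊆ Finset.range (max (m + 1) (s.sup id + 1)) := by
      intro k hk
      simp only [Finset.mem_range]
      have : k ≤ Finset.sup _ id := Finset.le_sup (f := id) hk
      omega
    calc C = s.card := hs_card.symm
      _ = ∑ _k ∈ s, 1 := by simp
      _ ≤ ∑ k ∈ s, f k := by
          apply Finset.sum_le_sum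
          intro k hk
          have : f k ≠ 0 := hs_sub hk
          omega
      _ ≤ ∑ k ∈ Finset.range (max (m + 1) (s.sup id + 1)), f k :=
          Finset.sum_le_sum_of_subset hssub

end Helpers
section Monoids

/-- The ℵ₀-monoid F_ℵ₀. -/
noncomputable def M1 : KappaMonoid ℕ ℕ∞ where
  zero := 0
  base := 0
  sum := s1
  sum_single := s1_single
  sum_flatten := s1_flatten

/-- The ℵ₀-monoid F_ℵ₀². -/
noncomputable def M2 : KappaMonoid ℕ (ℕ∞ × ℕ∞) where
  zero := 0
  base := 0
  sum := fun x => (s1 fun k => (x k).1, s1 fun k => (x k).2)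
  sum_single := by
    intro x hx
    have h1 : ∀ i, i ≠ 0 → (x i).1 = 0 := fun i hi => by rw [hx i hi]; rfl
    have h2 : ∀ i, i ≠ 0 → (x i).2 = 0 := fun i hi => by rw [hx i hi]; rfl
    exact Prod.ext (s1_single _ h1) (s1_single _ h2)
  sum_flatten := by
    intro x π
    exact Prod.ext (s1_flatten (fun p => (x p).1) π) (s1_flatten (fun p => (x p).2) π)

lemma M2_sum_fst (x : ℕ → ℕ∞ × ℕ∞) : (M2.sum x).1 = s1 fun k => (x k).1 := rfl
lemma M2_sum_snd (x : ℕ → ℕ∞ × ℕ∞) : (M2.sum x).2 = s1 fun k => (x k).2 := rfl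
lemma M2_zero : M2.zero = 0 := rfl
lemma M2_base : M2.base = 0 := rfl

lemma M2_add (a b : ℕ∞ × ℕ∞) : M2.add a b = a + b := by
  set j := Classical.choose (exists_ne (M2.base)) with hj
  have hjne : j ≠ M2.base := Classical.choose_spec (exists_ne (M2.base))
  have hjne0 : j ≠ 0 := hjne
  unfold KappaMonoid.add
  rw [← hj]
  apply Prod.ext
  · rw [M2_sum_fst]
    have : (fun k => (M2.pairFam M2.base j a b k).1) =
        fun k => if k = 0 then a.1 else if k = j then b.1 else 0 := by
      funext k; simp only [KappaMonoid.pairFam, M2_base, M2_zero]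
      by_cases h0 : k = 0
      · subst h0; simp
      · by_cases h1 : k = j
        · subst h1; simp [h0]
        · simp [h0, h1]
    rw [this, s1_pair hjne0]; rfl
  · rw [M2_sum_snd]
    have : (fun k => (M2.pairFam M2.base j a b k).2) =
        fun k => if k = 0 then a.2 else if k = j then b.2 else 0 := by
      funext k; simp only [KappaMonoid.pairFam, M2_base, M2_zero]
      by_cases h0 : k = 0
      · subst h0; simp
      · by_cases h1 : k = j
        · subst h1; simp [h0]
        · simp [h0, h1]
    rw [this, s1_pair hjne0]; rfl

lemma M2_sumOn_finset (t : Finset ℕ) (x : ℕ → ℕ∞ × ℕ∞) :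
    M2.sumOn (↑t) x = (∑ k ∈ t, (x k).1, ∑ k ∈ t, (x k).2) := by
  unfold KappaMonoid.sumOn
  apply Prod.ext
  · rw [M2_sum_fst, s1_subset (t := t) ?_]
    · apply Finset.sum_congr rfl
      intro k hk
      have : k ∈ (↑t : Set ℕ) := hk
      simp [this]
    · intro k hk
      simp only [Function.mem_support] at hk
      by_contra h
      have : k ∉ (↑t : Set ℕ) := h
      simp [this, M2_zero] at hk
  · rw [M2_sum_snd, s1_subset (t := t) ?_]
    · apply Finset.sum_congr rfl
      intro k hk
      have : k ∈ (↑t : Set ℕ) := hk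
      simp [this]
    · intro k hk
      simp only [Function.mem_support] at hk
      by_contra h
      have : k ∉ (↑t : Set ℕ) := h
      simp [this, M2_zero] at hk

end Monoids
section Cuts

variable (a b : ℕ → ℕ)

/-- Recursive interleaving cut points. -/
noncomputable def cuts (hT : s1 (fun k => (a k : ℕ∞)) = s1 (fun k => (b k : ℕ∞))) :
    ℕ → ℕ × ℕ
  | 0 => (0, 0)
  | μ + 1 =>
    let p := cuts hT μ
    let i' := Classical.choose (prefix_reach a (∑ k ∈ Finset.range p.2, b k) p.1
      (le_trans (prefix_le_s1 b p.2) (le_of_eq hT.symm)))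
    let j' := Classical.choose (prefix_reach b (∑ k ∈ Finset.range i', a k) p.2
      (le_trans (prefix_le_s1 a i') (le_of_eq hT)))
    (i', j')

variable (hT : s1 (fun k => (a k : ℕ∞)) = s1 (fun k => (b k : ℕ∞)))

lemma cuts_zero : cuts a b hT 0 = (0, 0) := rfl

lemma cuts_succ (μ : ℕ) :
    ((cuts a b hT μ).1 < (cuts a b hT (μ+1)).1) ∧
    ((cuts a b hT μ).2 < (cuts a b hT (μ+1)).2) ∧
    (∑ k ∈ Finset.range (cuts a b hT μ).2, b k ≤
      ∑ k ∈ Finset.range (cuts a b hT (μ+1)).1, a k) ∧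
    (∑ k ∈ Finset.range (cuts a b hT (μ+1)).1, a k ≤
      ∑ k ∈ Finset.range (cuts a b hT (μ+1)).2, b k) := by
  set p := cuts a b hT μ with hp
  have hi := Classical.choose_spec (prefix_reach a (∑ k ∈ Finset.range p.2, b k) p.1
      (le_trans (prefix_le_s1 b p.2) (le_of_eq hT.symm)))
  set i' := Classical.choose (prefix_reach a (∑ k ∈ Finset.range p.2, b k) p.1
      (le_trans (prefix_le_s1 b p.2) (le_of_eq hT.symm))) with hi'
  have hj := Classical.choose_spec (prefix_reach b (∑ k ∈ Finset.range i', a k) p.2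
      (le_trans (prefix_le_s1 a i') (le_of_eq hT)))
  have hsucc : cuts a b hT (μ+1) =
      (i', Classical.choose (prefix_reach b (∑ k ∈ Finset.range i', a k) p.2
      (le_trans (prefix_le_s1 a i') (le_of_eq hT)))) := rfl
  rw [hsucc]
  exact ⟨hi.1, hj.1, hi.2, hj.2⟩

lemma cuts_base_le (μ : ℕ) :
    ∑ k ∈ Finset.range (cuts a b hT μ).1, a k ≤ ∑ k ∈ Finset.range (cuts a b hT μ).2, b k := by
  cases μ with
  | zero => simp [cuts_zero]
  | succ ν => exact (cuts_succ a b hT ν).2.2.2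

end Cuts

section PartitionHelper

lemma partition_Ico (i : ℕ → ℕ) (h0 : i 0 = 0) (hlt : ∀ μ, i μ < i (μ+1)) :
    IsIndexedPartition (fun μ => (↑(Finset.Ico (i μ) (i (μ+1))) : Set ℕ)) := by
  have hsm : StrictMono i := strictMono_nat_of_lt_succ hlt
  constructor
  · intro μ ν hne
    rw [Set.disjoint_left]
    intro k hkμ hkν
    simp only [Finset.coe_Ico, Set.mem_Ico] at hkμ hkν
    rcases lt_or_gt_of_ne hne with h | h
    · have : i (μ+1) ≤ i ν := hsm.monotone (by omega)
      omega
    · have : i (ν+1) ≤ i μ := hsm.monotone (by omega)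
      omega
  · rw [Set.eq_univ_iff_forall]
    intro k
    set μ := Nat.findGreatest (fun μ => i μ ≤ k) k with hμ
    have h1 : i μ ≤ k :=
      Nat.findGreatest_spec (P := fun μ => i μ ≤ k) (Nat.zero_le k) (by simp [h0])
    have h2 : k < i (μ + 1) := by
      by_contra h
      push_neg at h
      have hle : μ + 1 ≤ k := le_trans (hsm.le_apply) h
      exact absurd h (Nat.findGreatest_is_greatest (P := fun μ => i μ ≤ k) (by omega) hle)
    simp only [Set.mem_iUnion]
    exact ⟨μ, by simp only [Finset.coe_Ico, Set.mem_Ico]; omega⟩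

lemma sum_Ico_sub (f : ℕ → ℕ) {m n : ℕ} (h : m ≤ n) :
    ∑ k ∈ Finset.Ico m n, f k = ∑ k ∈ Finset.range n, f k - ∑ k ∈ Finset.range m, f k := by
  have := Finset.sum_Ico_consecutive f (Nat.zero_le m) h
  simp only [← Finset.range_eq_Ico] at this
  omega

lemma isLimitElt_nat_iff (μ : ℕ) : IsLimitElt μ ↔ μ = 0 := by
  unfold IsLimitElt
  constructor
  · intro h
    by_contra hne
    exact h ⟨μ - 1, by omega, by simp [Order.succ_eq_add_one]; omega⟩
  · intro h
    subst h
    rintro ⟨ν, hν, -⟩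
    omega

end PartitionHelper
section Braided

lemma M2_braided (x y : ℕ → ℕ∞ × ℕ∞)
    (hx : ∀ k, x k ∈ {z : ℕ∞ × ℕ∞ | ∃ m : ℕ, z = ((m : ℕ∞), (m : ℕ∞))})
    (hy : ∀ k, y k ∈ {z : ℕ∞ × ℕ∞ | ∃ m : ℕ, z = ((m : ℕ∞), (m : ℕ∞))})
    (hsum : M2.sum x = M2.sum y) :
    M2.Braided Cardinal.aleph0 {z : ℕ∞ × ℕ∞ | ∃ m : ℕ, z = ((m : ℕ∞), (m : ℕ∞))} x y := by
  choose a ha using hx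
  choose b hb using hy
  have hT : s1 (fun k => (a k : ℕ∞)) = s1 (fun k => (b k : ℕ∞)) := by
    have h1 : (fun k => ((a k : ℕ∞))) = fun k => (x k).1 := by
      funext k; rw [ha k]
    have h2 : (fun k => ((b k : ℕ∞))) = fun k => (y k).1 := by
      funext k; rw [hb k]
    rw [h1, h2, ← M2_sum_fst, ← M2_sum_fst, hsum]
  set c := cuts a b hT with hc
  set P : ℕ → ℕ := fun n => ∑ k ∈ Finset.range n, a k with hP
  set Q : ℕ → ℕ := fun n => ∑ k ∈ Finset.range n, b k with hQ
  have f1 : ∀ μ, (c μ).1 < (c (μ+1)).1 := fun μ => (cuts_succ a b hT μ).1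
  have f1' : ∀ μ, (c μ).2 < (c (μ+1)).2 := fun μ => (cuts_succ a b hT μ).2.1
  have f2 : ∀ μ, Q (c μ).2 ≤ P (c (μ+1)).1 := fun μ => (cuts_succ a b hT μ).2.2.1
  have f3 : ∀ μ, P (c (μ+1)).1 ≤ Q (c (μ+1)).2 := fun μ => (cuts_succ a b hT μ).2.2.2
  have f4 : ∀ μ, P (c μ).1 ≤ Q (c μ).2 := fun μ => cuts_base_le a b hT μ
  have hc0 : c 0 = (0, 0) := rfl
  refine ⟨fun μ => (↑(Finset.Ico ((c μ).1) ((c (μ+1)).1)) : Set ℕ),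
          fun μ => (↑(Finset.Ico ((c μ).2) ((c (μ+1)).2)) : Set ℕ),
          fun μ => ((P (c (μ+1)).1 - Q (c μ).2 : ℕ), (P (c (μ+1)).1 - Q (c μ).2 : ℕ)),
          fun μ => ((Q (c μ).2 - P (c μ).1 : ℕ), (Q (c μ).2 - P (c μ).1 : ℕ)),
          ?_, ?_, ?_, ?_, ?_, ?_, ?_, ?_, ?_⟩
  · exact partition_Ico _ (by rw [hc0]) f1
  · exact partition_Ico _ (by rw [hc0]) f1'
  · intro μ
    exact Cardinal.lt_aleph0_iff_set_finite.2 (Finset.finite_toSet _)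
  · intro μ
    exact Cardinal.lt_aleph0_iff_set_finite.2 (Finset.finite_toSet _)
  · exact fun μ => ⟨_, rfl⟩
  · exact fun μ => ⟨_, rfl⟩
  · intro μ hμ
    rw [isLimitElt_nat_iff] at hμ
    subst hμ
    beta_reduce
    rw [hc0]
    simp [M2_zero, Prod.ext_iff, hP, hQ]
  · intro μ
    rw [M2_sumOn_finset, M2_add]
    have hab : ∀ k, (x k).1 = (a k : ℕ∞) ∧ (x k).2 = (a k : ℕ∞) := by
      intro k; rw [ha k]; exact ⟨rfl, rfl⟩
    have hsum1 : ∑ k ∈ Finset.Ico ((c μ).1) ((c (μ+1)).1), (x k).1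
        = ((P (c (μ+1)).1 - P (c μ).1 : ℕ) : ℕ∞) := by
      rw [Finset.sum_congr rfl (fun k _ => (hab k).1)]
      rw [← Nat.cast_sum, sum_Ico_sub a (le_of_lt (f1 μ))]
    have hsum2 : ∑ k ∈ Finset.Ico ((c μ).1) ((c (μ+1)).1), (x k).2
        = ((P (c (μ+1)).1 - P (c μ).1 : ℕ) : ℕ∞) := by
      rw [Finset.sum_congr rfl (fun k _ => (hab k).2)]
      rw [← Nat.cast_sum, sum_Ico_sub a (le_of_lt (f1 μ))]
    have key : P (c (μ+1)).1 - P (c μ).1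
        = (Q (c μ).2 - P (c μ).1) + (P (c (μ+1)).1 - Q (c μ).2) := by
      have := f4 μ; have := f2 μ; omega
    rw [hsum1, hsum2]
    simp only [Prod.mk_add_mk, ← Nat.cast_add, ← key]
  · intro μ
    rw [M2_sumOn_finset, M2_add]
    have hab : ∀ k, (y k).1 = (b k : ℕ∞) ∧ (y k).2 = (b k : ℕ∞) := by
      intro k; rw [hb k]; exact ⟨rfl, rfl⟩
    have hsucc : Order.succ μ = μ + 1 := by simp [Order.succ_eq_add_one]
    have hsum1 : ∑ k ∈ Finset.Ico ((c μ).2) ((c (μ+1)).2), (y k).1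
        = ((Q (c (μ+1)).2 - Q (c μ).2 : ℕ) : ℕ∞) := by
      rw [Finset.sum_congr rfl (fun k _ => (hab k).1)]
      rw [← Nat.cast_sum, sum_Ico_sub b (le_of_lt (f1' μ))]
    have hsum2 : ∑ k ∈ Finset.Ico ((c μ).2) ((c (μ+1)).2), (y k).2
        = ((Q (c (μ+1)).2 - Q (c μ).2 : ℕ) : ℕ∞) := by
      rw [Finset.sum_congr rfl (fun k _ => (hab k).2)]
      rw [← Nat.cast_sum, sum_Ico_sub b (le_of_lt (f1' μ))]
    have key : Q (c (μ+1)).2 - Q (c μ).2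
        = (Q (c (μ+1)).2 - P (c (μ+1)).1) + (P (c (μ+1)).1 - Q (c μ).2) := by
      have := f2 μ; have := f3 μ; omega
    rw [hsucc, hsum1, hsum2]
    simp only [Prod.mk_add_mk, ← Nat.cast_add, ← key]

end Braided
section HhatChar

lemma M2_Hhat_eq :
    {h : ℕ∞ × ℕ∞ | ∃ x : ℕ → ℕ∞ × ℕ∞,
        (∀ k, x k ∈ {z : ℕ∞ × ℕ∞ | ∃ m : ℕ, z = ((m : ℕ∞), (m : ℕ∞))}) ∧ M2.sum x = h}
    = {z : ℕ∞ × ℕ∞ | ∃ m : ℕ, z = ((m : ℕ∞), (m : ℕ∞))} ∪ {((⊤ : ℕ∞), (⊤ : ℕ∞))} := by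
  ext z
  constructor
  · rintro ⟨x, hxX, rfl⟩
    choose a ha using hxX
    have h1 : (fun k => (x k).1) = fun k => ((a k : ℕ∞)) := by funext k; rw [ha k]
    have h2 : (fun k => (x k).2) = fun k => ((a k : ℕ∞)) := by funext k; rw [ha k]
    by_cases hfin : (Function.support fun k => ((a k : ℕ∞))).Finite
    · left
      have hval : s1 (fun k => ((a k : ℕ∞))) = ((∑ k ∈ hfin.toFinset, a k : ℕ) : ℕ∞) := by
        rw [s1_subset (t := hfin.toFinset) (by simp [Set.Finite.coe_toFinset])]
        push_cast; rfl
      refine ⟨∑ k ∈ hfin.toFinset, a k, ?_⟩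
      apply Prod.ext
      · rw [M2_sum_fst, h1, hval]
      · rw [M2_sum_snd, h2, hval]
    · right
      have hval : s1 (fun k => ((a k : ℕ∞))) = ⊤ := s1_inf hfin
      have : M2.sum x = ((⊤ : ℕ∞), (⊤ : ℕ∞)) := by
        apply Prod.ext
        · rw [M2_sum_fst, h1, hval]
        · rw [M2_sum_snd, h2, hval]
      simp [this]
  · rintro (⟨m, rfl⟩ | hz)
    · refine ⟨fun k => if k = 0 then ((m : ℕ∞), (m : ℕ∞)) else 0, ?_, ?_⟩
      · intro k
        by_cases h : k = 0
        · exact ⟨m, by simp [h]⟩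
        · exact ⟨0, by simp [h]; rfl⟩
      · rw [M2.sum_single _ (fun i hi => by simp [M2_base] at hi ⊢; simp [hi, M2_zero])]
        simp [M2_base]
    · simp only [Set.mem_singleton_iff] at hz
      subst hz
      refine ⟨fun _ => ((1 : ℕ∞), (1 : ℕ∞)), fun k => ⟨1, by norm_num⟩, ?_⟩
      have hsupp : (Function.support fun _ : ℕ => (1 : ℕ∞)) = Set.univ := by
        ext k; simp
      apply Prod.ext
      · rw [M2_sum_fst]
        exact s1_inf (by rw [hsupp]; exact Set.infinite_univ)
      · rw [M2_sum_snd]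
        exact s1_inf (by rw [hsupp]; exact Set.infinite_univ)

end HhatChar

/-- Example 3.16: for `H = {(n,n) : n ∈ ℕ} ⊆ ℕ²`, the universal ℵ₀-extension is
`Ĥ = {(n,n) : n ∈ ℕ} ∪ {(ℵ₀,ℵ₀)} ⊆ F_{ℵ₀}²`, which is isomorphic (as ℵ₀-monoid) to
`F_{ℵ₀} = ℕ ∪ {ℵ₀}`; and `Ĥ` is a proper subset of the solution set of `2x = x + y`
in `F_{ℵ₀}²`, which also contains all `(ℵ₀, n)` for `n ∈ ℕ`. -/
theorem universal_aleph0_extension_diagonal :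
    ∃ (M₁ : KappaMonoid ℕ ℕ∞) (M : KappaMonoid ℕ (ℕ∞ × ℕ∞)),
      -- `M₁` is the ℵ₀-monoid `F_{ℵ₀} = ℕ ∪ {ℵ₀}`
      M₁.zero = 0 ∧
      (∀ x : ℕ → ℕ∞, (Function.support x).Finite → M₁.sum x = ∑ᶠ i, x i) ∧
      (∀ x : ℕ → ℕ∞, (Function.support x).Infinite → M₁.sum x = ⊤) ∧
      -- `M` is the ℵ₀-monoid `F_{ℵ₀}²` with componentwise summation
      M.zero = 0 ∧
      (∀ x : ℕ → ℕ∞ × ℕ∞,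
        ((Function.support fun k => (x k).1).Finite →
          (M.sum x).1 = ∑ᶠ k, (x k).1) ∧
        ((Function.support fun k => (x k).1).Infinite → (M.sum x).1 = ⊤) ∧
        ((Function.support fun k => (x k).2).Finite →
          (M.sum x).2 = ∑ᶠ k, (x k).2) ∧
        ((Function.support fun k => (x k).2).Infinite → (M.sum x).2 = ⊤)) ∧
      (letI X : Set (ℕ∞ × ℕ∞) := {z | ∃ m : ℕ, z = ((m : ℕ∞), (m : ℕ∞))}
       letI Hhat : Set (ℕ∞ × ℕ∞) :=
         {h | ∃ x : ℕ → ℕ∞ × ℕ∞, (∀ k, x k ∈ X) ∧ M.sum x = h}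
       letI Ssol : Set (ℕ∞ × ℕ∞) := {z | z.1 + z.1 = z.1 + z.2}
      -- `Ĥ` (the ℵ₀-submonoid generated by `H`) is `{(n,n)} ∪ {(∞,∞)}`
      (Hhat = {z | ∃ m : ℕ, z = ((m : ℕ∞), (m : ℕ∞))} ∪ {(⊤, ⊤)}) ∧
      -- `Ĥ` is the universal ℵ₀-extension of `H`: it is ℵ₀⁻-braided over `H`
      (∀ x y : ℕ → ℕ∞ × ℕ∞, (∀ k, x k ∈ X) → (∀ k, y k ∈ X) →
        M.sum x = M.sum y → M.Braided Cardinal.aleph0 X x y) ∧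
      -- `Ĥ ≅ F_{ℵ₀}` as ℵ₀-monoids
      (∃ f : ℕ∞ → ℕ∞ × ℕ∞, Function.Injective f ∧ Set.range f = Hhat ∧
        ∀ x : ℕ → ℕ∞, f (M₁.sum x) = M.sum fun k => f (x k)) ∧
      -- `Ĥ` is a proper subset of the solution set of `2x = x + y`
      Hhat ⊆ Ssol ∧ Hhat ≠ Ssol ∧ ∀ m : ℕ, ((⊤ : ℕ∞), (m : ℕ∞)) ∈ Ssol) := by
  refine ⟨M1, M2, rfl, fun x h => s1_fin h, fun x h => s1_inf h, rfl, ?_, ?_, ?_, ?_, ?_, ?_, ?_⟩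
  · intro x
    exact ⟨fun h => by rw [M2_sum_fst]; exact s1_fin h,
           fun h => by rw [M2_sum_fst]; exact s1_inf h,
           fun h => by rw [M2_sum_snd]; exact s1_fin h,
           fun h => by rw [M2_sum_snd]; exact s1_inf h⟩
  · exact M2_Hhat_eq
  · exact M2_braided
  · refine ⟨fun z => (z, z), fun u v h => congrArg Prod.fst h, ?_, fun x => rfl⟩
    rw [M2_Hhat_eq]
    ext w
    constructor
    · rintro ⟨z, rfl⟩
      induction z using ENat.recTopCoe with
      | top => right; rfl
      | coe n => left; exact ⟨n, rfl⟩
    · rintro (⟨m, rfl⟩ | hw)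
      · exact ⟨(m : ℕ∞), rfl⟩
      · simp only [Set.mem_singleton_iff] at hw
        subst hw
        exact ⟨⊤, rfl⟩
  · rw [M2_Hhat_eq]
    rintro z (⟨m, rfl⟩ | hz)
    · rfl
    · simp only [Set.mem_singleton_iff] at hz
      subst hz
      rfl
  · rw [M2_Hhat_eq]
    intro h
    have hmem : ((⊤ : ℕ∞), (0 : ℕ∞)) ∈
        ({z : ℕ∞ × ℕ∞ | ∃ m : ℕ, z = ((m : ℕ∞), (m : ℕ∞))} ∪ {((⊤ : ℕ∞), (⊤ : ℕ∞))}) := by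
      rw [h]
      show (⊤ : ℕ∞) + ⊤ = ⊤ + 0
      simp
    rcases hmem with ⟨m, hm⟩ | hm
    · exact absurd (congrArg Prod.fst hm) (by simp)
    · exact absurd (congrArg Prod.snd hm) (by simp)
  · intro m
    show (⊤ : ℕ∞) + ⊤ = ⊤ + (m : ℕ∞)
    simp
end
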